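/- Let g(x,y) = u(x,y)·x^N·∏_{i=1}^d (y - α_i(x)) where u(0,0) ≠ 0, N ∈ ℚ_{≥0}, α_i(x) = c_i x^τ + (higher order terms) for 1 ≤ i ≤ k, and ord_x(α_i) < τ for k+1 ≤ i ≤ d. Then in_τ(g) = c·x^M·∏_{i=1}^k (y - c_i x^τ) for some nonzero c ∈ ℂ and some M ∈ ℚ. -/

import Mathlib

noncomputable section

open Polynomial

/-- Polynomials in `y` with fractional power series (Hahn series with rational exponents)
coefficients in `x`. -/
abbrev FracPoly := Polynomial (HahnSeries ℚ ℂ)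

/-- The set of weights `i + τ·j` (as real numbers) of the monomials `x^i y^j` appearing
in `g`. -/
def wSupp (τ : ℚ) (g : FracPoly) : Set ℝ :=
  {r | ∃ j : ℕ, ∃ i ∈ (g.coeff j).support, r = (i : ℝ) + (τ : ℝ) * j}

/-- The weighted order `ord_τ(g) = min { i + τ·j : a_{ij} ≠ 0 }` (with weights `w(x)=1`,
`w(y)=τ`), computed as an infimum of real numbers. -/
def ordT (τ : ℚ) (g : FracPoly) : ℝ := sInf (wSupp τ g)

/-- Truncation of a Hahn series retaining only the exponents `i` with `i + τ·j = r`. -/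
def truncAt (τ : ℚ) (r : ℝ) (j : ℕ) (a : HahnSeries ℚ ℂ) : HahnSeries ℚ ℂ where
  coeff i := if ((i : ℝ) + (τ : ℝ) * j = r) then a.coeff i else 0
  isPWO_support' := a.isPWO_support.mono (by
    intro i hi
    simp only [Function.mem_support] at hi
    by_cases h : ((i : ℝ) + (τ : ℝ) * j = r) <;> simp [h] at hi
    exact hi)

/-- The weighted initial part `in_τ(g) = Σ_{i+τj = ord_τ(g)} a_{ij} x^i y^j`. -/
def inT (τ : ℚ) (g : FracPoly) : FracPoly :=
  g.sum fun j a => Polynomial.C (truncAt τ (ordT τ g) j a) * Polynomial.X ^ j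

/-- Multiplication of the coefficients of a Hahn series by their exponent:
`Σ aᵢ xⁱ ↦ Σ i·aᵢ xⁱ`. -/
def expMul (a : HahnSeries ℚ ℂ) : HahnSeries ℚ ℂ where
  coeff i := (i : ℂ) * a.coeff i
  isPWO_support' := a.isPWO_support.mono (by
    intro i hi
    simp only [Function.mem_support] at hi ⊢
    intro h
    simp [h] at hi)

/-- The partial derivative `∂/∂x` on Hahn series: `Σ aᵢ xⁱ ↦ Σ i·aᵢ x^{i-1}`. -/
def derivX (a : HahnSeries ℚ ℂ) : HahnSeries ℚ ℂ :=
  HahnSeries.embDomain (OrderIso.addRight (-1 : ℚ)).toOrderEmbedding (expMul a)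

/-- The partial derivative `∂/∂x` applied coefficientwise to a polynomial in `y` with
fractional power series coefficients. -/
def pderivX (h : FracPoly) : FracPoly :=
  h.sum fun n a => Polynomial.C (derivX a) * Polynomial.X ^ n

/-- The Jacobian determinant `jac(f,g) = f_x g_y − f_y g_x`. -/
def jacF (f g : FracPoly) : FracPoly :=
  pderivX f * Polynomial.derivative g - Polynomial.derivative f * pderivX g

namespace Aux

/-- all monomials have weight exactly r -/
def Wt (τ : ℚ) (r : ℝ) (g : FracPoly) : Prop :=
  ∀ j : ℕ, ∀ i : ℚ, (g.coeff j).coeff i ≠ 0 → (i : ℝ) + (τ : ℝ) * j = r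

/-- all monomials have weight > r -/
def WtGt (τ : ℚ) (r : ℝ) (g : FracPoly) : Prop :=
  ∀ j : ℕ, ∀ i : ℚ, (g.coeff j).coeff i ≠ 0 → r < (i : ℝ) + (τ : ℝ) * j

lemma truncAt_coeff (τ : ℚ) (r : ℝ) (j : ℕ) (a : HahnSeries ℚ ℂ) (i : ℚ) :
    (truncAt τ r j a).coeff i = if ((i : ℝ) + (τ : ℝ) * j = r) then a.coeff i else 0 := rfl

lemma truncAt_zero (τ : ℚ) (r : ℝ) (j : ℕ) : truncAt τ r j 0 = 0 := by
  ext i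
  simp [truncAt_coeff]

lemma inT_coeff (τ : ℚ) (g : FracPoly) (j : ℕ) (i : ℚ) :
    ((inT τ g).coeff j).coeff i
      = if ((i : ℝ) + (τ : ℝ) * j = ordT τ g) then (g.coeff j).coeff i else 0 := by
  have : (inT τ g).coeff j = truncAt τ (ordT τ g) j (g.coeff j) := by
    rw [inT, Polynomial.sum, Polynomial.finset_sum_coeff]
    simp only [Polynomial.coeff_C_mul, Polynomial.coeff_X_pow]
    rw [Finset.sum_congr rfl (fun n _ => by
      rw [mul_ite, mul_one, mul_zero])]
    rw [Finset.sum_ite_eq g.support j (fun n => truncAt τ (ordT τ g) n (g.coeff n))]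
    by_cases h : j ∈ g.support
    · simp [h]
    · simp only [h, if_false]
      rw [Polynomial.notMem_support_iff] at h
      rw [h, truncAt_zero]
  rw [this, truncAt_coeff]

lemma ordT_isLeast {τ : ℚ} {g : FracPoly} (hg : g ≠ 0) :
    IsLeast (wSupp τ g) (ordT τ g) := by
  have hsupp : g.support.Nonempty := Polynomial.nonempty_support_iff.mpr hg
  set T : Finset ℝ := g.support.image (fun j => (((g.coeff j).order : ℚ) : ℝ) + (τ : ℝ) * j) with hT
  have hTne : T.Nonempty := hsupp.image _
  set m := T.min' hTne with hm
  have hleast : IsLeast (wSupp τ g) m := by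
    constructor
    · obtain ⟨j, hj, hjm⟩ := Finset.mem_image.mp (T.min'_mem hTne)
      refine ⟨j, (g.coeff j).order, ?_, hjm.symm⟩
      rw [HahnSeries.mem_support]
      exact HahnSeries.coeff_order_eq_zero.not.mpr (Polynomial.mem_support_iff.mp hj)
    · rintro r ⟨j, i, hi, rfl⟩
      rw [HahnSeries.mem_support] at hi
      have hj : j ∈ g.support := by
        rw [Polynomial.mem_support_iff]
        intro h; rw [h] at hi; simp at hi
      have h1 : (((g.coeff j).order : ℚ) : ℝ) + (τ : ℝ) * j ∈ T :=
        Finset.mem_image.mpr ⟨j, hj, rfl⟩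
      have h2 : ((g.coeff j).order : ℝ) ≤ (i : ℝ) := by
        exact_mod_cast HahnSeries.order_le_of_coeff_ne_zero hi
      calc m ≤ _ := T.min'_le _ h1
        _ ≤ _ := by linarith
  rwa [ordT, hleast.csInf_eq]

lemma wSupp_lb {τ : ℚ} {g : FracPoly} (hg : g ≠ 0) {j : ℕ} {i : ℚ}
    (h : (g.coeff j).coeff i ≠ 0) : ordT τ g ≤ (i : ℝ) + (τ : ℝ) * j :=
  (ordT_isLeast hg).2 ⟨j, i, (HahnSeries.mem_support _ _).mpr h, rfl⟩

/-- Key characterization lemma. -/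
lemma inT_eq_of {τ : ℚ} {g h : FracPoly} {r : ℝ}
    (hh : Wt τ r h) (hh0 : h ≠ 0) (he : WtGt τ r (g - h)) :
    ordT τ g = r ∧ inT τ g = h := by
  -- the error term has zero coefficient at weight ≤ r
  have hez : ∀ j : ℕ, ∀ i : ℚ, (i : ℝ) + (τ : ℝ) * j ≤ r → ((g - h).coeff j).coeff i = 0 := by
    intro j i hle
    by_contra hne
    exact absurd (he j i hne) (not_lt.mpr hle)
  have hgh : ∀ j : ℕ, ∀ i : ℚ, (i : ℝ) + (τ : ℝ) * j ≤ r →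
      (g.coeff j).coeff i = (h.coeff j).coeff i := by
    intro j i hle
    have := hez j i hle
    rw [Polynomial.coeff_sub, HahnSeries.coeff_sub] at this
    linear_combination this
  -- pick a nonzero coefficient of h
  obtain ⟨j₀, hj₀⟩ : ∃ j, h.coeff j ≠ 0 := by
    by_contra hc
    push_neg at hc
    exact hh0 (Polynomial.ext fun n => by rw [hc n, Polynomial.coeff_zero])
  set i₀ := (h.coeff j₀).order with hi₀
  have hc₀ : (h.coeff j₀).coeff i₀ ≠ 0 := HahnSeries.coeff_order_eq_zero.not.mpr hj₀
  have hw₀ : (i₀ : ℝ) + (τ : ℝ) * j₀ = r := hh j₀ i₀ hc₀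
  have hg₀ : (g.coeff j₀).coeff i₀ ≠ 0 := by
    rw [hgh j₀ i₀ hw₀.le]; exact hc₀
  have hord : ordT τ g = r := by
    have hgne : g ≠ 0 := by
      intro hg0; rw [hg0] at hg₀; simp at hg₀
    have hleast : IsLeast (wSupp τ g) r := by
      constructor
      · exact ⟨j₀, i₀, (HahnSeries.mem_support _ _).mpr hg₀, hw₀.symm⟩
      · rintro s ⟨j, i, hi, rfl⟩
        rw [HahnSeries.mem_support] at hi
        by_cases hch : (h.coeff j).coeff i ≠ 0
        · exact (hh j i hch).ge
        · push_neg at hch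
          have : ((g - h).coeff j).coeff i ≠ 0 := by
            rw [Polynomial.coeff_sub, HahnSeries.coeff_sub, hch, sub_zero]
            exact hi
          exact (he j i this).le
    rw [ordT, hleast.csInf_eq]
  refine ⟨hord, ?_⟩
  apply Polynomial.ext; intro j
  apply HahnSeries.coeff_inj.mp
  funext i
  rw [inT_coeff, hord]
  by_cases hc : (i : ℝ) + (τ : ℝ) * j = r
  · rw [if_pos hc, hgh j i hc.le]
  · rw [if_neg hc]
    by_contra hne
    exact hc (hh j i fun h0 => hne h0.symm)


lemma wt_inT {τ : ℚ} (g : FracPoly) : Wt τ (ordT τ g) (inT τ g) := by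
  intro j i h
  rw [inT_coeff] at h
  by_cases hc : (i : ℝ) + (τ : ℝ) * j = ordT τ g
  · exact hc
  · rw [if_neg hc] at h; exact absurd rfl h

lemma inT_ne_zero {τ : ℚ} {g : FracPoly} (hg : g ≠ 0) : inT τ g ≠ 0 := by
  obtain ⟨j, i, hi, hw⟩ := (ordT_isLeast (τ := τ) hg).1
  rw [HahnSeries.mem_support] at hi
  intro h0
  have : ((inT τ g).coeff j).coeff i = 0 := by rw [h0]; simp
  rw [inT_coeff, if_pos hw.symm] at this
  exact hi this

lemma wtGt_sub_inT {τ : ℚ} {g : FracPoly} (hg : g ≠ 0) :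
    WtGt τ (ordT τ g) (g - inT τ g) := by
  intro j i h
  rw [Polynomial.coeff_sub, HahnSeries.coeff_sub, inT_coeff] at h
  by_cases hc : (i : ℝ) + (τ : ℝ) * j = ordT τ g
  · rw [if_pos hc, sub_self] at h; exact absurd rfl h
  · rw [if_neg hc, sub_zero] at h
    exact lt_of_le_of_ne (wSupp_lb hg h) (Ne.symm hc)

lemma exists_of_mul_coeff_ne_zero {p q : FracPoly} {j : ℕ} {i : ℚ}
    (h : ((p * q).coeff j).coeff i ≠ 0) :
    ∃ j₁ j₂ : ℕ, ∃ i₁ i₂ : ℚ, j₁ + j₂ = j ∧ i₁ + i₂ = i ∧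
      (p.coeff j₁).coeff i₁ ≠ 0 ∧ (q.coeff j₂).coeff i₂ ≠ 0 := by
  rw [Polynomial.coeff_mul] at h
  have h2 : ∑ x ∈ Finset.HasAntidiagonal.antidiagonal j, (p.coeff x.1 * q.coeff x.2).coeff i ≠ 0 := by
    intro h0
    apply h
    have : ((∑ x ∈ Finset.HasAntidiagonal.antidiagonal j, p.coeff x.1 * q.coeff x.2).coeff i)
        = ∑ x ∈ Finset.HasAntidiagonal.antidiagonal j, (p.coeff x.1 * q.coeff x.2).coeff i :=
      map_sum (⟨⟨fun x => x.coeff i, rfl⟩, fun _ _ => rfl⟩ : HahnSeries ℚ ℂ →+ ℂ) _ _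
    rw [this, h0]
  obtain ⟨⟨j₁, j₂⟩, hmem, hne⟩ := Finset.exists_ne_zero_of_sum_ne_zero h2
  rw [Finset.HasAntidiagonal.mem_antidiagonal] at hmem
  rw [HahnSeries.coeff_mul] at hne
  obtain ⟨⟨i₁, i₂⟩, hmem2, hne2⟩ := Finset.exists_ne_zero_of_sum_ne_zero hne
  rw [Finset.mem_addAntidiagonal] at hmem2
  refine ⟨j₁, j₂, i₁, i₂, hmem, hmem2.2.2, ?_, ?_⟩
  · exact left_ne_zero_of_mul hne2
  · exact right_ne_zero_of_mul hne2

lemma wt_weight_add {τ : ℚ} {j₁ j₂ : ℕ} {i₁ i₂ : ℚ} :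
    ((i₁ + i₂ : ℚ) : ℝ) + (τ : ℝ) * ((j₁ + j₂ : ℕ) : ℕ)
      = ((i₁ : ℝ) + (τ : ℝ) * j₁) + ((i₂ : ℝ) + (τ : ℝ) * j₂) := by
  push_cast; ring

lemma wt_mul {τ : ℚ} {a b : ℝ} {p q : FracPoly} (hp : Wt τ a p) (hq : Wt τ b q) :
    Wt τ (a + b) (p * q) := by
  intro j i h
  obtain ⟨j₁, j₂, i₁, i₂, rfl, rfl, h1, h2⟩ := exists_of_mul_coeff_ne_zero h
  rw [wt_weight_add, hp _ _ h1, hq _ _ h2]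

lemma wtGt_mul_left {τ : ℚ} {a b : ℝ} {p q : FracPoly} (hq : q ≠ 0)
    (hp : WtGt τ a p) (hb : b ≤ ordT τ q) : WtGt τ (a + b) (p * q) := by
  intro j i h
  obtain ⟨j₁, j₂, i₁, i₂, rfl, rfl, h1, h2⟩ := exists_of_mul_coeff_ne_zero h
  rw [wt_weight_add]
  have := hp _ _ h1
  have := wSupp_lb (τ := τ) hq h2
  linarith

lemma wtGt_mul_right {τ : ℚ} {a b : ℝ} {p q : FracPoly} (hp : p ≠ 0)
    (ha : a ≤ ordT τ p) (hq : WtGt τ b q) : WtGt τ (a + b) (p * q) := by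
  intro j i h
  obtain ⟨j₁, j₂, i₁, i₂, rfl, rfl, h1, h2⟩ := exists_of_mul_coeff_ne_zero h
  rw [wt_weight_add]
  have := wSupp_lb (τ := τ) hp h1
  have := hq _ _ h2
  linarith

lemma wtGt_add {τ : ℚ} {r : ℝ} {p q : FracPoly} (hp : WtGt τ r p) (hq : WtGt τ r q) :
    WtGt τ r (p + q) := by
  intro j i h
  rw [Polynomial.coeff_add, HahnSeries.coeff_add] at h
  rcases (by by_contra hc; push_neg at hc; rw [hc.1, hc.2, add_zero] at h; exact h rfl :
      (p.coeff j).coeff i ≠ 0 ∨ (q.coeff j).coeff i ≠ 0) with h' | h'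
  · exact hp _ _ h'
  · exact hq _ _ h'

lemma inT_mul {τ : ℚ} {p q : FracPoly} (hp : p ≠ 0) (hq : q ≠ 0) :
    inT τ (p * q) = inT τ p * inT τ q := by
  have hip := inT_ne_zero (τ := τ) hp
  have hiq := inT_ne_zero (τ := τ) hq
  have hh0 : inT τ p * inT τ q ≠ 0 := mul_ne_zero hip hiq
  have hh : Wt τ (ordT τ p + ordT τ q) (inT τ p * inT τ q) := wt_mul (wt_inT p) (wt_inT q)
  have key : p * q - inT τ p * inT τ q
      = (p - inT τ p) * q + inT τ p * (q - inT τ q) := by ring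
  have he : WtGt τ (ordT τ p + ordT τ q) (p * q - inT τ p * inT τ q) := by
    rw [key]
    apply wtGt_add
    · exact wtGt_mul_left hq (wtGt_sub_inT hp) le_rfl
    · have hord : ordT τ (inT τ p) = ordT τ p :=
        (inT_eq_of (wt_inT p) hip (fun j i h => by simp at h)).1
      exact wtGt_mul_right hip hord.ge (wtGt_sub_inT hq)
  exact (inT_eq_of hh hh0 he).2

lemma wtGt_zero {τ : ℚ} {r : ℝ} : WtGt τ r (0 : FracPoly) := by
  intro j i h; simp at h

lemma inT_of_wt {τ : ℚ} {r : ℝ} {h : FracPoly} (hh : Wt τ r h) (hh0 : h ≠ 0) :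
    inT τ h = h :=
  (inT_eq_of hh hh0 (by rw [sub_self h]; exact wtGt_zero)).2

lemma wt_one (τ : ℚ) : Wt τ 0 (1 : FracPoly) := by
  intro j i h
  rw [Polynomial.coeff_one] at h
  by_cases hj : j = 0
  · subst hj
    rw [if_pos rfl, HahnSeries.coeff_one] at h
    by_cases hi : i = 0
    · subst hi; simp
    · rw [if_neg hi] at h; exact absurd rfl h
  · rw [if_neg hj] at h; simp at h

lemma inT_one (τ : ℚ) : inT τ (1 : FracPoly) = 1 := inT_of_wt (wt_one τ) one_ne_zero

lemma prod_ne_zero' {ι : Type*} (s : Finset ι) (f : ι → FracPoly) :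
    (∀ i ∈ s, f i ≠ 0) → (∏ i ∈ s, f i) ≠ 0 := by
  classical
  refine Finset.induction_on s (fun _ => by rw [Finset.prod_empty]; exact one_ne_zero) ?_
  intro x t hx ih hf
  rw [Finset.prod_insert hx]
  exact mul_ne_zero (hf x (Finset.mem_insert_self x t))
    (ih fun i hi => hf i (Finset.mem_insert_of_mem hi))

set_option maxHeartbeats 1000000 in
lemma inT_prod {τ : ℚ} {ι : Type*} (s : Finset ι) (f : ι → FracPoly) :
    (∀ i ∈ s, f i ≠ 0) → inT τ (∏ i ∈ s, f i) = ∏ i ∈ s, inT τ (f i) := by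
  classical
  refine Finset.induction_on s
    (fun _ => by rw [Finset.prod_empty, Finset.prod_empty]; exact inT_one τ) ?_
  intro x t hx ih hf
  have ht : (∏ i ∈ t, f i) ≠ 0 :=
    prod_ne_zero' t f fun i hi => hf i (Finset.mem_insert_of_mem hi)
  rw [Finset.prod_insert hx, Finset.prod_insert hx,
    inT_mul (hf x (Finset.mem_insert_self x t)) ht,
    ih fun i hi => hf i (Finset.mem_insert_of_mem hi)]

lemma prod_C_single {ι : Type*} (s : Finset ι) (r : ι → ℚ) (v : ι → ℂ) :
    (∏ i ∈ s, (Polynomial.C (HahnSeries.single (r i) (v i)) : FracPoly))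
      = Polynomial.C (HahnSeries.single (∑ i ∈ s, r i) (∏ i ∈ s, v i)) := by
  classical
  refine Finset.induction_on s (by simp) ?_
  intro x t hx ih
  rw [Finset.prod_insert hx, ih, Finset.sum_insert hx, Finset.prod_insert hx,
    ← HahnSeries.single_mul_single, map_mul]

lemma wt_C_single (τ : ℚ) (N : ℚ) (v : ℂ) :
    Wt τ ((N : ℝ)) (Polynomial.C (HahnSeries.single N v) : FracPoly) := by
  intro j i h
  rw [Polynomial.coeff_C] at h
  by_cases hj : j = 0
  · subst hj
    rw [if_pos rfl, HahnSeries.coeff_single] at h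
    by_cases hi : i = N
    · subst hi; simp
    · rw [if_neg hi] at h; exact absurd rfl h
  · rw [if_neg hj] at h; simp at h

lemma inT_u {τ : ℚ} (hτ : 0 < τ) {u : FracPoly} (hu0 : (u.coeff 0).coeff 0 ≠ 0)
    (husupp : ∀ j : ℕ, ∀ i ∈ (u.coeff j).support, 0 ≤ i) :
    inT τ u = Polynomial.C (HahnSeries.single 0 ((u.coeff 0).coeff 0)) := by
  refine (inT_eq_of (r := ((0:ℚ) : ℝ)) (wt_C_single τ 0 _) ?_ ?_).2
  · exact Polynomial.C_ne_zero.mpr (HahnSeries.single_ne_zero hu0)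
  · intro j i h
    rw [Polynomial.coeff_sub, HahnSeries.coeff_sub, Polynomial.coeff_C] at h
    have hine : (u.coeff j).coeff i ≠ 0 := by
      intro h0
      rw [h0] at h
      by_cases hj : j = 0
      · subst hj
        rw [if_pos rfl, HahnSeries.coeff_single] at h
        by_cases hi : i = 0
        · subst hi
          rw [if_pos rfl] at h
          exact h (by rw [h0]; ring)
        · rw [if_neg hi] at h; exact h (by ring)
      · rw [if_neg hj] at h; simp at h
    have hige : 0 ≤ i := husupp j i ((HahnSeries.mem_support _ _).mpr hine)
    by_cases hj : j = 0
    · subst hj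
      rw [if_pos rfl, HahnSeries.coeff_single] at h
      have hi0 : i ≠ 0 := by
        intro hi; subst hi
        rw [if_pos rfl, sub_self] at h
        exact h rfl
      push_cast
      have : (0:ℝ) < (i:ℝ) := by exact_mod_cast lt_of_le_of_ne hige (Ne.symm hi0)
      simpa using this
    · have hj1 : 1 ≤ j := Nat.one_le_iff_ne_zero.mpr hj
      have h1 : (0:ℝ) ≤ (i:ℝ) := by exact_mod_cast hige
      have h2 : (τ:ℝ) ≤ (τ:ℝ) * j := by
        have : (1:ℝ) ≤ (j:ℝ) := by exact_mod_cast hj1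
        nlinarith [show (0:ℝ) < (τ:ℝ) from by exact_mod_cast hτ]
      have h3 : (0:ℝ) < (τ:ℝ) := by exact_mod_cast hτ
      push_cast
      linarith

lemma wt_lin (τ : ℚ) (c : ℂ) :
    Wt τ ((τ : ℝ)) (Polynomial.X - Polynomial.C (HahnSeries.single τ c) : FracPoly) := by
  intro j i h
  rw [Polynomial.coeff_sub, Polynomial.coeff_X, Polynomial.coeff_C] at h
  match j with
  | 0 =>
    rw [if_neg one_ne_zero, if_pos rfl, zero_sub, HahnSeries.coeff_neg,
      HahnSeries.coeff_single] at h
    by_cases hi : i = τ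
    · subst hi; push_cast; ring
    · rw [if_neg hi] at h; simp at h
  | 1 =>
    rw [if_pos rfl, if_neg one_ne_zero, sub_zero, HahnSeries.coeff_one] at h
    by_cases hi : i = 0
    · subst hi; push_cast; ring
    · rw [if_neg hi] at h; exact absurd rfl h
  | (n+2) =>
    rw [if_neg (by omega), if_neg (by omega), sub_zero] at h
    simp at h

/-- initial form of a factor with `ord = τ` root. -/
lemma inT_factor_high {τ : ℚ} {αi : HahnSeries ℚ ℂ} {ci : ℂ}
    (h1 : αi.coeff τ = ci) (h2 : ∀ q : ℚ, q < τ → αi.coeff q = 0) :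
    inT τ (Polynomial.X - Polynomial.C αi : FracPoly)
      = Polynomial.X - Polynomial.C (HahnSeries.single τ ci) := by
  refine (inT_eq_of (r := ((τ:ℚ) : ℝ)) (wt_lin τ ci) (Polynomial.X_sub_C_ne_zero _) ?_).2
  intro j i h
  have hkey : (Polynomial.X - Polynomial.C αi - (Polynomial.X - Polynomial.C (HahnSeries.single τ ci)) : FracPoly)
      = Polynomial.C (HahnSeries.single τ ci - αi) := by
    rw [map_sub]; ring
  rw [hkey, Polynomial.coeff_C] at h
  by_cases hj : j = 0
  · subst hj
    rw [if_pos rfl, HahnSeries.coeff_sub, HahnSeries.coeff_single] at h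
    rcases lt_trichotomy i τ with hlt | heq | hgt
    · rw [if_neg hlt.ne, h2 i hlt, sub_zero] at h
      exact absurd rfl h
    · subst heq
      rw [if_pos rfl, h1, sub_self] at h
      exact absurd rfl h
    · push_cast
      have : (τ:ℝ) < (i:ℝ) := by exact_mod_cast hgt
      simpa using this
  · rw [if_neg hj] at h; simp at h

/-- initial form of a factor with `0 < ord < τ` root. -/
lemma inT_factor_low {τ : ℚ} {αi : HahnSeries ℚ ℂ} (hne : αi ≠ 0)
    (hord : αi.order < τ) :
    inT τ (Polynomial.X - Polynomial.C αi : FracPoly)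
      = Polynomial.C (HahnSeries.single αi.order (-(αi.coeff αi.order))) := by
  refine (inT_eq_of (r := ((αi.order : ℚ) : ℝ)) (wt_C_single τ _ _) ?_ ?_).2
  · exact Polynomial.C_ne_zero.mpr
      (HahnSeries.single_ne_zero (neg_ne_zero.mpr (HahnSeries.coeff_order_eq_zero.not.mpr hne)))
  · intro j i h
    rw [Polynomial.coeff_sub, Polynomial.coeff_sub, Polynomial.coeff_X,
      Polynomial.coeff_C, Polynomial.coeff_C] at h
    match j with
    | 0 =>
      rw [if_neg one_ne_zero, if_pos rfl, if_pos rfl, zero_sub, HahnSeries.coeff_sub,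
        HahnSeries.coeff_neg, HahnSeries.coeff_single] at h
      rcases lt_trichotomy i αi.order with hlt | heq | hgt
      · rw [if_neg hlt.ne, HahnSeries.coeff_eq_zero_of_lt_order hlt] at h
        simp at h
      · subst heq
        rw [if_pos rfl] at h
        simp at h
      · push_cast
        have : ((αi.order : ℚ):ℝ) < (i:ℝ) := by exact_mod_cast hgt
        simpa using this
    | 1 =>
      rw [if_pos rfl, if_neg one_ne_zero, if_neg one_ne_zero, sub_zero, sub_zero,
        HahnSeries.coeff_one] at h
      by_cases hi : i = 0
      · subst hi
        have : ((αi.order : ℚ):ℝ) < (τ:ℝ) := by exact_mod_cast hord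
        push_cast
        linarith
      · rw [if_neg hi] at h; exact absurd rfl h
    | (n+2) =>
      rw [if_neg (by omega), if_neg (by omega), if_neg (by omega)] at h
      simp at h

end Aux

/-- Let `g(x,y) = u(x,y)·x^N·∏_{i=1}^d (y - α_i(x))` where `u(0,0) ≠ 0`, `N ∈ ℚ_{≥0}`,
`α_i(x) = c_i x^τ + (higher order)` for `1 ≤ i ≤ k`, and `0 < ord_x(α_i) < τ` for
`k+1 ≤ i ≤ d`.  Then `in_τ(g) = c·x^M·∏_{i=1}^k (y - c_i x^τ)` for some `c ∈ ℂ \ {0}`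
and some `M ∈ ℚ`. -/
theorem inT_of_factorization (τ : ℚ) (hτ : 0 < τ) (d k : ℕ) (hk : k ≤ d)
    (u : FracPoly) (N : ℚ) (hN : 0 ≤ N)
    (α : ℕ → HahnSeries ℚ ℂ) (c : ℕ → ℂ)
    (hu0 : (u.coeff 0).coeff 0 ≠ 0)
    (husupp : ∀ j : ℕ, ∀ i ∈ (u.coeff j).support, 0 ≤ i)
    (hhigh : ∀ i, 1 ≤ i → i ≤ k →
      ((α i).coeff τ = c i ∧ ∀ q : ℚ, q < τ → (α i).coeff q = 0))
    (hlow : ∀ i, k + 1 ≤ i → i ≤ d →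
      (α i ≠ 0 ∧ 0 < (α i).order ∧ (α i).order < τ)) :
    ∃ c₀ : ℂ, c₀ ≠ 0 ∧ ∃ M : ℚ,
      inT τ (u * Polynomial.C (HahnSeries.single N (1 : ℂ)) *
          ∏ i ∈ Finset.Icc 1 d, (Polynomial.X - Polynomial.C (α i)))
        = Polynomial.C (HahnSeries.single M c₀) *
          ∏ i ∈ Finset.Icc 1 k,
            (Polynomial.X - Polynomial.C (HahnSeries.single τ (c i))) := by
  classical
  have hune : u ≠ 0 := by
    intro h0
    apply hu0
    rw [h0]
    simp
  have hCne : (Polynomial.C (HahnSeries.single N (1:ℂ)) : FracPoly) ≠ 0 :=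
    Polynomial.C_ne_zero.mpr (HahnSeries.single_ne_zero one_ne_zero)
  have hfacne : ∀ i : ℕ, (Polynomial.X - Polynomial.C (α i) : FracPoly) ≠ 0 :=
    fun i => Polynomial.X_sub_C_ne_zero _
  have hPne : (∏ i ∈ Finset.Icc 1 d, (Polynomial.X - Polynomial.C (α i)) : FracPoly) ≠ 0 :=
    Aux.prod_ne_zero' _ _ fun i _ => hfacne i
  have hIoc : ∀ n : ℕ, Finset.Icc 1 n = Finset.Ioc 0 n := fun n => by
    ext x; simp only [Finset.mem_Icc, Finset.mem_Ioc]; omega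
  refine ⟨(u.coeff 0).coeff 0 * ∏ i ∈ Finset.Ioc k d, (-(α i).coeff (α i).order), ?_,
    N + ∑ i ∈ Finset.Ioc k d, (α i).order, ?_⟩
  · apply mul_ne_zero hu0
    apply Finset.prod_ne_zero_iff.mpr
    intro i hi
    rw [Finset.mem_Ioc] at hi
    exact neg_ne_zero.mpr (HahnSeries.coeff_order_eq_zero.not.mpr (hlow i hi.1 hi.2).1)
  · rw [Aux.inT_mul (mul_ne_zero hune hCne) hPne, Aux.inT_mul hune hCne,
      Aux.inT_u hτ hu0 husupp, Aux.inT_of_wt (Aux.wt_C_single τ N 1) hCne,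
      Aux.inT_prod _ _ (fun i _ => hfacne i)]
    have hsplit : (∏ i ∈ Finset.Icc 1 d, inT τ (Polynomial.X - Polynomial.C (α i)))
        = (∏ i ∈ Finset.Icc 1 k, inT τ (Polynomial.X - Polynomial.C (α i)))
          * ∏ i ∈ Finset.Ioc k d, inT τ (Polynomial.X - Polynomial.C (α i)) := by
      rw [hIoc d, hIoc k, Finset.prod_Ioc_consecutive _ (Nat.zero_le k) hk]
    rw [hsplit]
    have h1 : (∏ i ∈ Finset.Icc 1 k, inT τ (Polynomial.X - Polynomial.C (α i)))
        = ∏ i ∈ Finset.Icc 1 k,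
            (Polynomial.X - Polynomial.C (HahnSeries.single τ (c i))) := by
      refine Finset.prod_congr rfl fun i hi => ?_
      rw [Finset.mem_Icc] at hi
      exact Aux.inT_factor_high (hhigh i hi.1 hi.2).1 (hhigh i hi.1 hi.2).2
    have h2 : (∏ i ∈ Finset.Ioc k d, inT τ (Polynomial.X - Polynomial.C (α i)))
        = Polynomial.C (HahnSeries.single (∑ i ∈ Finset.Ioc k d, (α i).order)
            (∏ i ∈ Finset.Ioc k d, (-(α i).coeff (α i).order))) := by
      rw [← Aux.prod_C_single]
      refine Finset.prod_congr rfl fun i hi => ?_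
      rw [Finset.mem_Ioc] at hi
      exact Aux.inT_factor_low (hlow i hi.1 hi.2).1 (hlow i hi.1 hi.2).2.2
    rw [h1, h2]
    set P := ∏ i ∈ Finset.Icc 1 k,
      (Polynomial.X - Polynomial.C (HahnSeries.single τ (c i))) with hP
    set S := ∑ i ∈ Finset.Ioc k d, (α i).order with hS
    set V := ∏ i ∈ Finset.Ioc k d, (-(α i).coeff (α i).order) with hV
    rw [mul_comm P, ← mul_assoc, ← map_mul, ← map_mul,
      HahnSeries.single_mul_single, HahnSeries.single_mul_single, zero_add, mul_one]


end
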